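/- Let r, u, s ∈ ℝ with r < 0 and u > 0, and let b ∈ ℂ with |b|² = −r/(12u). Define Φ ∈ ℂ⁴ by Φ = b·(−2, 1, 0, 1). Then Φ satisfies the static Landau–Ginzburg equation r·Φ + 2u·‖Φ‖²·Φ + 2s·T²·conj(T)·(1,1,1,1) = 0, where ‖Φ‖² = Σᵢ |Φᵢ|² and T = Σᵢ Φᵢ. -/

import Mathlib

/-- the configuration `Φ = b·(−2,1,0,1)` with
`|b|² = −r/(12u)` solves the static Landau–Ginzburg equation
`r·Φ + 2u·‖Φ‖²·Φ + 2s·T²·conj(T)·(1,1,1,1) = 0` with `T = Σᵢ Φᵢ`. -/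
theorem stmt14 (r u s : ℝ) (hr : r < 0) (hu : 0 < u) (b : ℂ)
    (hb : ‖b‖ ^ 2 = -r / (12 * u))
    (Φ : Fin 4 → ℂ) (hΦ : Φ = fun i => b * ![-2, 1, 0, 1] i) :
    ∀ i : Fin 4,
      (r : ℂ) * Φ i
        + 2 * (u : ℂ) * (∑ j : Fin 4, ((‖Φ j‖ : ℝ) : ℂ) ^ 2) * Φ i
        + 2 * (s : ℂ) * (∑ j : Fin 4, Φ j) ^ 2
            * (starRingEnd ℂ) (∑ j : Fin 4, Φ j) * 1 = 0 := by
  subst hΦ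
  have hu' : (u : ℝ) ≠ 0 := ne_of_gt hu
  have habs : (‖b‖ : ℝ) ^ 2 * 6 = -r / (2 * u) := by
    rw [hb]; field_simp; ring
  intro i
  have hsum : (∑ j : Fin 4, ((‖(fun i => b * ![-2, 1, 0, 1] i) j‖ : ℝ) : ℂ) ^ 2)
      = ((-r / (2 * u) : ℝ) : ℂ) := by
    simp only [Fin.sum_univ_four, norm_mul]
    push_cast [← habs]
    simp [Matrix.cons_val_zero, Matrix.cons_val_one]
    ring
  rw [hsum]
  have hT : (∑ j : Fin 4, (fun i => b * ![-2, 1, 0, 1] i) j) = 0 := by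
    simp [Fin.sum_univ_four]; ring
  rw [hT]
  simp only [map_zero, mul_zero, zero_mul, zero_pow, ne_eq, OfNat.ofNat_ne_zero,
    not_false_iff, add_zero]
  have : ((-r / (2 * u) : ℝ) : ℂ) = -(r : ℂ) / (2 * u) := by push_cast; ring
  rw [this]
  have h2u : (2 * (u : ℂ)) ≠ 0 := by
    simp [Complex.ofReal_ne_zero, hu']
  have hu'' : (u : ℂ) ≠ 0 := by exact_mod_cast hu'
  field_simp
  ring
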